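/- Let K be a trivially valued field and ‖·‖ a seminorm on a finite-dimensional K-vector space W. If v, w ∈ W satisfy ‖v‖ < ‖w‖, then ‖v + w‖ = ‖w‖. In particular the seminorm takes only finitely many values on W (at most dim W + 1 distinct values). -/
import Mathlib


/-- Over a trivially valued field, a seminorm on a finite-dimensional vector
space satisfies: if `N v < N w` then `N (v + w) = N w`; in particular `N` takes
only finitely many values, at most `dim V + 1` many. -/
theorem seminorm_trivial_valuation_values
    {K V : Type*} [NormedField K] [AddCommGroup V] [Module K V]
    [FiniteDimensional K V]
    (htriv : ∀ x : K, x ≠ 0 → ‖x‖ = 1)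
    (N : V → ℝ)
    (hnonneg : ∀ v, 0 ≤ N v)
    (hsmul : ∀ (c : K) (v : V), N (c • v) = ‖c‖ * N v)
    (hadd : ∀ v w, N (v + w) ≤ max (N v) (N w)) :
    (∀ v w : V, N v < N w → N (v + w) = N w) ∧
    (Set.range N).Finite ∧ Nat.card (Set.range N) ≤ Module.finrank K V + 1 := by
  have N0 : N 0 = 0 := by
    have := hsmul 0 0; simpa using this
  have hneg : ∀ v, N (-v) = N v := by
    intro v
    have := hsmul (-1 : K) v
    rw [htriv (-1) (by norm_num)] at this
    simpa using this
  have key : ∀ v w : V, N v < N w → N (v + w) = N w := by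
    intro v w h
    have h1 : N (v + w) ≤ N w := (hadd v w).trans_eq (max_eq_right h.le)
    have h2 : N w ≤ max (N (v + w)) (N v) := by
      have := hadd (v + w) (-v)
      rw [hneg] at this
      simpa [add_comm, add_assoc] using this
    have h3 : N w ≤ N (v + w) := by
      rcases le_max_iff.mp h2 with h' | h'
      · exact h'
      · exact absurd h' (not_le.mpr h)
    exact le_antisymm h1 h3
  refine ⟨key, ?_⟩
  -- the submodules of vectors of seminorm ≤ max r 0
  let S : ℝ → Submodule K V := fun r =>
    { carrier := {v | N v ≤ max r 0}
      add_mem' := fun {a b} ha hb => (hadd a b).trans (max_le ha hb)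
      zero_mem' := by simp [Set.mem_setOf_eq, N0]
      smul_mem' := by
        intro c v hv
        by_cases hc : c = 0
        · simp [hc, Set.mem_setOf_eq, N0]
        · show N (c • v) ≤ _
          rw [hsmul, htriv c hc, one_mul]; exact hv }
  have hSmem : ∀ (r : ℝ) (v : V), v ∈ S r ↔ N v ≤ max r 0 := fun r v => Iff.rfl
  have hSlt : ∀ r r' : ℝ, r ∈ Set.range N → r' ∈ Set.range N → r < r' → S r < S r' := by
    intro r r' hr hr' hlt
    obtain ⟨u, hu⟩ := hr
    obtain ⟨w, hw⟩ := hr'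
    have hr0 : 0 ≤ r := hu ▸ hnonneg u
    refine lt_of_le_of_ne ?_ ?_
    · intro v hv
      exact ((hSmem r v).mp hv).trans (max_le_max hlt.le le_rfl)
    · intro hEq
      have hw' : w ∈ S r' := by rw [hSmem, hw]; exact le_max_left _ _
      rw [← hEq, hSmem, hw, max_eq_left hr0] at hw'
      exact absurd hw' (not_le.mpr hlt)
  -- injective map into Fin (finrank + 1)
  let g : Set.range N → Fin (Module.finrank K V + 1) := fun r =>
    ⟨Module.finrank K (S r.1), Nat.lt_succ_of_le (Submodule.finrank_le _)⟩
  have hg : Function.Injective g := by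
    intro r r' hEq
    by_contra hne
    have hne' : r.1 ≠ r'.1 := fun h => hne (Subtype.ext h)
    rcases lt_or_gt_of_ne hne' with h | h
    · have := Submodule.finrank_lt_finrank_of_lt (hSlt _ _ r.2 r'.2 h)
      exact absurd (congrArg Fin.val hEq) (Nat.ne_of_lt this)
    · have := Submodule.finrank_lt_finrank_of_lt (hSlt _ _ r'.2 r.2 h)
      exact absurd (congrArg Fin.val hEq).symm (Nat.ne_of_lt this)
  have hfin : (Set.range N).Finite := Set.finite_coe_iff.mp (Finite.of_injective g hg)
  refine ⟨hfin, ?_⟩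
  calc Nat.card (Set.range N) ≤ Nat.card (Fin (Module.finrank K V + 1)) :=
        Nat.card_le_card_of_injective g hg
    _ = Module.finrank K V + 1 := by simp
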